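/- Let K : ℝⁿ × ℝⁿ → ℂ be measurable with |K(x,y)| ≤ C₀ |x−y|^{−(N+n+1)} whenever |x−y| ≥ 1, for some N > 0. Let B = B(x₀, r) be a ball with 1 < r ≤ 2, let 1 < q < ∞, and let a ∈ L^q(ℝⁿ) be supported in B with ‖a‖_{L^q} ≤ |B|^{1/q − 1}. Define Ta(x) = ∫ K(x,y) a(y) dy. Then for every integer k ≥ 1, ‖Ta‖_{L^q(2^{k+1}B ∖ 2^k B)} ≤ C · 2^{−k} (1 + 2^k r)^{−N} |2^k B|^{1/q − 1}, with C depending only on C₀, n, q, N. -/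

import Mathlib

open Real MeasureTheory Metric

open scoped ENNReal NNReal

private lemma core_real (n k : ℕ) (C₀ N q v r : ℝ) (hC₀ : 0 < C₀) (hN : 0 < N)
    (hq : 1 < q) (hv : 0 < v) (hr : 1 < r) (hk : 1 ≤ k) :
    (((2:ℝ)^(k+1) * r)^n * v)^(q⁻¹) * (C₀ * (((2:ℝ)^k * r)/2) ^ (-(N+(n:ℝ)+1))) ≤
    (C₀ * v * 2^(2*N+2*(n:ℝ)+2)) * (2:ℝ)^(-(k:ℝ)) * (1 + (2:ℝ)^k*r) ^ (-N) *
      (((2:ℝ)^k*r)^n * v)^(1/q - 1) := by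
  have hr0 : (0:ℝ) < r := lt_trans one_pos hr
  have h2k : (2:ℝ) ≤ 2^k := by
    calc (2:ℝ) = 2^1 := (pow_one 2).symm
    _ ≤ 2^k := pow_le_pow_right₀ one_le_two hk
  set s : ℝ := (2:ℝ)^k * r with hs_def
  have hs2 : 2 ≤ s := by
    calc (2:ℝ) ≤ 2^k := h2k
    _ = 2^k * 1 := (mul_one _).symm
    _ ≤ s := by rw [hs_def]; exact mul_le_mul_of_nonneg_left hr.le (by positivity)
  have hs0 : (0:ℝ) < s := lt_of_lt_of_le two_pos hs2
  have h2s : (2:ℝ)^(k+1) * r = 2 * s := by rw [pow_succ, hs_def]; ring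
  have hks : (2:ℝ)^k * 1 ≤ s := by rw [hs_def]; exact mul_le_mul_of_nonneg_left hr.le (by positivity)
  clear_value s
  rw [h2s]
  have hq0 : (0:ℝ) < q := lt_trans one_pos hq
  have hL : (0:ℝ) < ((2*s)^n * v)^(q⁻¹) * (C₀ * (s/2) ^ (-(N+(n:ℝ)+1))) := by positivity
  have hR : (0:ℝ) < (C₀ * v * 2^(2*N+2*(n:ℝ)+2)) * (2:ℝ)^(-(k:ℝ)) * (1 + s) ^ (-N) *
      ((s)^n * v)^(1/q - 1) := by positivity
  rw [← Real.exp_log hL, ← Real.exp_log hR]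
  apply Real.exp_le_exp.mpr
  have l1 : Real.log (((2*s)^n * v)^(q⁻¹) * (C₀ * (s/2) ^ (-(N+(n:ℝ)+1))))
      = q⁻¹ * ((n:ℝ) * (Real.log 2 + Real.log s) + Real.log v)
        + (Real.log C₀ + (-(N+(n:ℝ)+1)) * (Real.log s - Real.log 2)) := by
    rw [Real.log_mul (by positivity) (by positivity),
      Real.log_rpow (by positivity), Real.log_mul (by positivity) (by positivity),
      Real.log_pow, Real.log_mul (by norm_num) (by positivity),
      Real.log_mul (by positivity) (by positivity),
      Real.log_rpow (by positivity), Real.log_div (by positivity) (by norm_num)]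
  have l2 : Real.log ((C₀ * v * 2^(2*N+2*(n:ℝ)+2)) * (2:ℝ)^(-(k:ℝ)) * (1 + s) ^ (-N) *
        ((s)^n * v)^(1/q - 1))
      = (Real.log C₀ + Real.log v + (2*N+2*(n:ℝ)+2) * Real.log 2)
        + (-(k:ℝ)) * Real.log 2 + (-N) * Real.log (1+s)
        + (1/q - 1) * ((n:ℝ) * Real.log s + Real.log v) := by
    have e1 : Real.log ((s)^n * v) = (n:ℝ) * Real.log s + Real.log v := by
      rw [Real.log_mul (by positivity) (by positivity), Real.log_pow]
    rw [Real.log_mul (by positivity) (by positivity),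
      Real.log_mul (by positivity) (by positivity),
      Real.log_mul (by positivity) (by positivity),
      Real.log_mul (by positivity) (by positivity),
      Real.log_rpow (by norm_num : (0:ℝ) < 2), Real.log_rpow (by norm_num : (0:ℝ) < 2),
      Real.log_rpow (by positivity), Real.log_rpow (by positivity), e1,
      Real.log_mul (by positivity) (by positivity)]
  rw [l1, l2]
  have hL2 : (0:ℝ) < Real.log 2 := Real.log_pos one_lt_two
  have hLs : Real.log 2 ≤ Real.log s := Real.log_le_log two_pos hs2
  have h1 : (k:ℝ) * Real.log 2 ≤ Real.log s := by
    have : Real.log ((2:ℝ)^k) ≤ Real.log s := by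
      apply Real.log_le_log (by positivity)
      calc (2:ℝ)^k = 2^k*1 := (mul_one _).symm
      _ ≤ s := hks
    rwa [Real.log_pow] at this
  have h2 : Real.log (1+s) ≤ Real.log 2 + Real.log s := by
    rw [← Real.log_mul (by norm_num) (by positivity)]
    exact Real.log_le_log (by positivity) (by linarith)
  have h3 : (n:ℝ) * q⁻¹ ≤ (n:ℝ) := by
    have : q⁻¹ ≤ 1 := by rw [inv_le_one_iff₀]; right; exact hq.le
    calc (n:ℝ) * q⁻¹ ≤ (n:ℝ) * 1 := mul_le_mul_of_nonneg_left this (Nat.cast_nonneg n)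
    _ = n := mul_one _
  have hh2 : N * Real.log (1+s) ≤ N * (Real.log 2 + Real.log s) :=
    mul_le_mul_of_nonneg_left h2 hN.le
  have hh3 : (n:ℝ) * q⁻¹ * Real.log 2 ≤ (n:ℝ) * Real.log 2 :=
    mul_le_mul_of_nonneg_right h3 hL2.le
  have hq' : 1/q = q⁻¹ := one_div q
  rw [hq']
  nlinarith [mul_le_mul_of_nonneg_left h1 hr0.le]

/-- Let K be measurable with |K(x,y)| ≤ C₀|x−y|^{−(N+n+1)} for |x−y| ≥ 1. If B = B(x₀,r)
with 1 < r ≤ 2, 1 < q < ∞, and a ∈ L^q is supported in B with ‖a‖_{L^q} ≤ |B|^{1/q−1},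
then ‖Ta‖_{L^q(2^{k+1}B ∖ 2^k B)} ≤ C 2^{−k}(1 + 2^k r)^{−N}|2^k B|^{1/q−1} for k ≥ 1. -/
theorem kernel_annulus_estimate (n : ℕ) (C₀ N q : ℝ) (hC₀ : 0 < C₀) (hN : 0 < N)
    (hq : 1 < q) :
    ∃ C > 0, ∀ (K : EuclideanSpace ℝ (Fin n) → EuclideanSpace ℝ (Fin n) → ℂ),
      Measurable (Function.uncurry K) →
      (∀ x y : EuclideanSpace ℝ (Fin n), 1 ≤ dist x y →
        ‖K x y‖ ≤ C₀ * dist x y ^ (-(N + n + 1))) →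
      ∀ (a : EuclideanSpace ℝ (Fin n) → ℂ) (x₀ : EuclideanSpace ℝ (Fin n)) (r : ℝ),
        1 < r → r ≤ 2 →
        MemLp a (ENNReal.ofReal q) volume →
        (∀ x, x ∉ ball x₀ r → a x = 0) →
        eLpNorm a (ENNReal.ofReal q) volume ≤
          ENNReal.ofReal ((volume (ball x₀ r)).toReal ^ (1/q - 1)) →
        ∀ k : ℕ, 1 ≤ k →
          eLpNorm (fun x => ∫ y, K x y * a y) (ENNReal.ofReal q)
              (volume.restrict (ball x₀ ((2:ℝ)^(k+1) * r) \ ball x₀ ((2:ℝ)^k * r))) ≤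
            ENNReal.ofReal (C * (2:ℝ)^(-(k:ℝ)) * (1 + (2:ℝ)^k * r) ^ (-N) *
              (volume (ball x₀ ((2:ℝ)^k * r))).toReal ^ (1/q - 1)) := by
  classical
  have hVlt : volume (ball (0 : EuclideanSpace ℝ (Fin n)) 1) < ⊤ := measure_ball_lt_top
  have hVpos : (0:ℝ≥0∞) < volume (ball (0 : EuclideanSpace ℝ (Fin n)) 1) :=
    measure_ball_pos _ _ one_pos
  set v : ℝ := (volume (ball (0 : EuclideanSpace ℝ (Fin n)) 1)).toReal with hv_def
  have hv : 0 < v := ENNReal.toReal_pos hVpos.ne' hVlt.ne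
  refine ⟨C₀ * v * 2^(2*N+2*(n:ℝ)+2), by positivity, ?_⟩
  intro K hKmeas hKbound a x₀ r hr1 hr2 ha hsupp hanorm k hk
  have hq0 : (0:ℝ) < q := lt_trans one_pos hq
  have hr0 : (0:ℝ) < r := lt_trans one_pos hr1
  have hp : (ENNReal.ofReal q).toReal = q := ENNReal.toReal_ofReal hq0.le
  have h2k : (2:ℝ) ≤ 2^k := by
    calc (2:ℝ) = 2^1 := (pow_one 2).symm
    _ ≤ 2^k := pow_le_pow_right₀ one_le_two hk
  have hs2 : (2:ℝ) ≤ 2^k * r := by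
    calc (2:ℝ) ≤ 2^k := h2k
    _ = 2^k * 1 := (mul_one _).symm
    _ ≤ 2^k * r := mul_le_mul_of_nonneg_left hr1.le (by positivity)
  have hs0 : (0:ℝ) < 2^k * r := by positivity
  -- the ball B and its measure
  have hBmeas : MeasurableSet (ball x₀ r) := measurableSet_ball
  have hrB0 : volume (ball x₀ r) ≠ 0 := (measure_ball_pos _ _ hr0).ne'
  have hrBt : volume (ball x₀ r) ≠ ⊤ := measure_ball_lt_top.ne
  -- integral of ‖a‖ is at most 1
  have hp1 : (1:ℝ≥0∞) ≤ ENNReal.ofReal q := ENNReal.one_le_ofReal.mpr hq.le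
  have hlin : ∫⁻ y, (‖a y‖₊ : ℝ≥0∞) ∂volume
      = ∫⁻ y in ball x₀ r, (‖a y‖₊ : ℝ≥0∞) ∂volume := by
    rw [← lintegral_indicator hBmeas]
    refine lintegral_congr fun y => ?_
    by_cases hy : y ∈ ball x₀ r
    · rw [Set.indicator_of_mem hy]
    · rw [Set.indicator_of_notMem hy, hsupp y hy]; simp
  have hBnorm : ENNReal.ofReal ((volume (ball x₀ r)).toReal ^ (1/q - 1))
      = volume (ball x₀ r) ^ (1/q - 1) := by
    rw [← ENNReal.ofReal_rpow_of_pos (ENNReal.toReal_pos hrB0 hrBt),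
      ENNReal.ofReal_toReal hrBt]
  have key1 : eLpNorm a 1 volume ≤ 1 := by
    rw [eLpNorm_one_eq_lintegral_enorm]; simp only [enorm_eq_nnnorm]; rw [hlin]
    have h1 : eLpNorm a 1 (volume.restrict (ball x₀ r))
        ≤ eLpNorm a (ENNReal.ofReal q) (volume.restrict (ball x₀ r)) *
          (volume.restrict (ball x₀ r)) Set.univ ^ (1 / (1:ℝ≥0∞).toReal - 1 / (ENNReal.ofReal q).toReal) :=
      eLpNorm_le_eLpNorm_mul_rpow_measure_univ hp1 ha.aestronglyMeasurable.restrict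
    rw [eLpNorm_one_eq_lintegral_enorm, Measure.restrict_apply_univ, ENNReal.toReal_one, hp] at h1; simp only [enorm_eq_nnnorm] at h1
    refine h1.trans ?_
    have h2 : eLpNorm a (ENNReal.ofReal q) (volume.restrict (ball x₀ r))
        ≤ volume (ball x₀ r) ^ (1/q - 1) := by
      rw [← hBnorm]
      exact (eLpNorm_mono_measure a Measure.restrict_le_self).trans hanorm
    calc eLpNorm a (ENNReal.ofReal q) (volume.restrict (ball x₀ r)) *
          volume (ball x₀ r) ^ (1/1 - 1/q)
        ≤ volume (ball x₀ r) ^ (1/q - 1) * volume (ball x₀ r) ^ (1/1 - 1/q) := by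
          exact mul_le_mul_left h2 _
      _ = volume (ball x₀ r) ^ ((1/q - 1) + (1/1 - 1/q)) :=
          (ENNReal.rpow_add _ _ hrB0 hrBt).symm
      _ = 1 := by norm_num
  have haint : Integrable a volume := by
    refine ⟨ha.aestronglyMeasurable, ?_⟩
    have : ∫⁻ y, (‖a y‖₊ : ℝ≥0∞) ∂volume ≤ 1 := by
      simp only [← enorm_eq_nnnorm]; rw [← eLpNorm_one_eq_lintegral_enorm]; exact key1
    exact lt_of_le_of_lt this ENNReal.one_lt_top
  have hIa : ∫ y, ‖a y‖ ∂volume ≤ 1 := by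
    rw [integral_norm_eq_lintegral_enorm ha.aestronglyMeasurable]
    have : eLpNorm a 1 volume ≠ ⊤ := lt_of_le_of_lt key1 ENNReal.one_lt_top |>.ne
    rw [eLpNorm_one_eq_lintegral_enorm] at key1
    calc (∫⁻ y, (‖a y‖₊ : ℝ≥0∞) ∂volume).toReal ≤ (1:ℝ≥0∞).toReal :=
      ENNReal.toReal_mono (by simp) key1
    _ = 1 := by simp
  -- pointwise bound
  set M : ℝ := C₀ * (((2:ℝ)^k * r)/2) ^ (-(N+(n:ℝ)+1)) with hM_def
  have hM0 : 0 ≤ M := by positivity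
  have hhalf : (1:ℝ) ≤ ((2:ℝ)^k * r)/2 := by linarith
  have hptwise : ∀ x : EuclideanSpace ℝ (Fin n), x ∉ ball x₀ ((2:ℝ)^k * r) →
      ‖∫ y, K x y * a y‖ ≤ M := by
    intro x hx
    have hdx : (2:ℝ)^k * r ≤ dist x x₀ := not_lt.mp (by simpa [mem_ball] using hx)
    have step : ∀ y, ‖K x y * a y‖ ≤ M * ‖a y‖ := by
      intro y
      by_cases hy : y ∈ ball x₀ r
      · have hyd : dist y x₀ < r := mem_ball.mp hy
        have hdist : ((2:ℝ)^k * r)/2 ≤ dist x y := by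
          have htri : dist x x₀ ≤ dist x y + dist y x₀ := dist_triangle x y x₀
          have : 2^k * r - r ≤ dist x y := by linarith
          have hhalf2 : ((2:ℝ)^k * r)/2 ≤ 2^k * r - r := by nlinarith
          linarith
        have h1d : (1:ℝ) ≤ dist x y := le_trans hhalf hdist
        have hKb := hKbound x y h1d
        have hKb2 : ‖K x y‖ ≤ M := by
          refine hKb.trans ?_
          rw [hM_def]
          refine mul_le_mul_of_nonneg_left ?_ hC₀.le
          exact Real.rpow_le_rpow_of_nonpos (by positivity) hdist (neg_nonpos.mpr (by positivity))
        rw [norm_mul]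
        exact mul_le_mul_of_nonneg_right hKb2 (norm_nonneg _)
      · rw [hsupp y hy]; simp [hM0]
    calc ‖∫ y, K x y * a y‖ ≤ ∫ y, ‖K x y * a y‖ ∂volume := norm_integral_le_integral_norm _
      _ ≤ ∫ y, M * ‖a y‖ ∂volume := by
          refine integral_mono_of_nonneg (Filter.Eventually.of_forall fun y => norm_nonneg _)
            (haint.norm.const_mul M) (Filter.Eventually.of_forall step)
      _ = M * ∫ y, ‖a y‖ ∂volume := integral_const_mul M _
      _ ≤ M * 1 := mul_le_mul_of_nonneg_left hIa hM0
      _ = M := mul_one M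
  -- apply the L^q bound over the annulus
  set A : Set (EuclideanSpace ℝ (Fin n)) :=
    ball x₀ ((2:ℝ)^(k+1) * r) \ ball x₀ ((2:ℝ)^k * r) with hA_def
  have hAmeas : MeasurableSet A := measurableSet_ball.diff measurableSet_ball
  have hbd : ∀ᵐ x ∂(volume.restrict A), ‖∫ y, K x y * a y‖ ≤ M := by
    filter_upwards [ae_restrict_mem hAmeas] with x hx
    exact hptwise x hx.2
  have h5 := eLpNorm_le_of_ae_bound (p := ENNReal.ofReal q) hbd
  rw [Measure.restrict_apply_univ, hp] at h5
  refine h5.trans ?_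
  have hA : volume A ≤ volume (ball x₀ ((2:ℝ)^(k+1) * r)) := measure_mono Set.diff_subset
  have hbig : volume (ball x₀ ((2:ℝ)^(k+1) * r))
      = ENNReal.ofReal ((((2:ℝ)^(k+1) * r))^n) * volume (ball (0 : EuclideanSpace ℝ (Fin n)) 1) := by
    rw [Measure.addHaar_ball_of_pos volume x₀ (by positivity : (0:ℝ) < 2^(k+1)*r),
      finrank_euclideanSpace_fin]
  have hsmall : (volume (ball x₀ ((2:ℝ)^k * r))).toReal = ((2:ℝ)^k * r)^n * v := by
    rw [Measure.addHaar_ball_of_pos volume x₀ hs0, finrank_euclideanSpace_fin,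
      ENNReal.toReal_mul, ENNReal.toReal_ofReal (by positivity)]
  calc volume A ^ q⁻¹ * ENNReal.ofReal M
      ≤ volume (ball x₀ ((2:ℝ)^(k+1) * r)) ^ q⁻¹ * ENNReal.ofReal M := by
        exact mul_le_mul_left (ENNReal.rpow_le_rpow hA (by positivity)) _
    _ = ENNReal.ofReal (((((2:ℝ)^(k+1) * r))^n * v) ^ q⁻¹ * M) := by
        rw [hbig, ← ENNReal.ofReal_toReal hVlt.ne, ← hv_def,
          ← ENNReal.ofReal_mul (by positivity), ENNReal.ofReal_rpow_of_pos (by positivity),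
          ← ENNReal.ofReal_mul (by positivity)]
    _ ≤ ENNReal.ofReal (C₀ * v * 2^(2*N+2*(n:ℝ)+2) * (2:ℝ)^(-(k:ℝ)) * (1 + (2:ℝ)^k * r) ^ (-N) *
          (volume (ball x₀ ((2:ℝ)^k * r))).toReal ^ (1/q - 1)) := by
        apply ENNReal.ofReal_le_ofReal
        rw [hsmall, hM_def]
        exact core_real n k C₀ N q v r hC₀ hN hq hv hr1 hk
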